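/- For every real V with 1+V ≠ 0, the identity F(V, -(1+V)) = ((γ-1)/2)·G(V, -(1+V)) holds. -/
import Mathlib

theorem stmt_2 (n γ lam κ : ℝ) (hn : n ≠ 0) (hγ : γ ≠ 0)
    (Vstar α k1 k2 k3 : ℝ)
    (hV : Vstar = (κ - 2*(lam-1))/(n*γ))
    (hα : α = ((lam-1) + (κ/2)*(γ-1))/γ)
    (hk1 : k1 = 1 + (n-1)*(γ-1)/2)
    (hk2 : k2 = ((n-1)*(γ-1) + (γ-3)*(lam-1))/2)
    (hk3 : k3 = (γ-1)*(lam-1)/2)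
    (G F : ℝ → ℝ → ℝ)
    (hG : ∀ V C, G V C = n*C^2*(V - Vstar) - V*(1+V)*(lam+V))
    (hF : ∀ V C, F V C = C*(C^2*(1 + α/(1+V)) - k1*(1+V)^2 + k2*(1+V) - k3))
    (V : ℝ) (hV1 : 1 + V ≠ 0) :
    F V (-(1+V)) = ((γ-1)/2) * G V (-(1+V)) := by
  subst hV hα hk1 hk2 hk3
  rw [hF, hG]
  field_simp
  ring
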